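/- Let C be a bivariate copula admitting a tail dependence function Λ. Then (i) Λ is 2-increasing: Λ(u',v') − Λ(u',v) − Λ(u,v') + Λ(u,v) ≥ 0 for all 0 ≤ u ≤ u' and 0 ≤ v ≤ v'; (ii) Λ is grounded: Λ(u,v) = 0 whenever u = 0 or v = 0; (iii) Λ is increasing: Λ(u,v) ≤ Λ(u',v') for 0 ≤ u ≤ u' and 0 ≤ v ≤ v'; and (iv) if Λ is not identically zero, then Λ(u,v) < Λ(u',v') whenever 0 < u < u' and 0 < v < v'. -/

import Mathlib

open MeasureTheory Filter Set

/-- A bivariate copula: `C : [0,1]² → [0,1]` with the grounded/marginal conditions and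
the 2-increasing property. -/
def IsCopula (C : ℝ → ℝ → ℝ) : Prop :=
  (∀ u ∈ Icc (0:ℝ) 1, ∀ v ∈ Icc (0:ℝ) 1, C u v ∈ Icc (0:ℝ) 1) ∧
  (∀ u ∈ Icc (0:ℝ) 1, C u 0 = 0 ∧ C 0 u = 0 ∧ C u 1 = u ∧ C 1 u = u) ∧
  (∀ u u' v v' : ℝ, u ∈ Icc (0:ℝ) 1 → u' ∈ Icc (0:ℝ) 1 →
    v ∈ Icc (0:ℝ) 1 → v' ∈ Icc (0:ℝ) 1 → u ≤ u' → v ≤ v' →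
    0 ≤ C u' v' - C u' v - C u v' + C u v)

/-- `Λ` is the tail dependence function of `C`:
`Λ(u,v) = lim_{p↓0} C(pu,pv)/p` for every `(u,v) ∈ [0,∞)²`. -/
def HasTDF (C Λ : ℝ → ℝ → ℝ) : Prop :=
  ∀ u v : ℝ, 0 ≤ u → 0 ≤ v →
    Tendsto (fun p : ℝ => C (p * u) (p * v) / p)
      (nhdsWithin (0:ℝ) (Ioi 0)) (nhds (Λ u v))

theorem tdf_two_increasing_grounded_monotone (C Λ : ℝ → ℝ → ℝ)
    (hC : IsCopula C) (hΛ : HasTDF C Λ) :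
    (∀ u u' v v' : ℝ, 0 ≤ u → u ≤ u' → 0 ≤ v → v ≤ v' →
      0 ≤ Λ u' v' - Λ u' v - Λ u v' + Λ u v) ∧
    (∀ u v : ℝ, 0 ≤ u → 0 ≤ v → (u = 0 ∨ v = 0) → Λ u v = 0) ∧
    (∀ u u' v v' : ℝ, 0 ≤ u → u ≤ u' → 0 ≤ v → v ≤ v' → Λ u v ≤ Λ u' v') ∧
    ((¬ ∀ u v : ℝ, 0 ≤ u → 0 ≤ v → Λ u v = 0) →
      ∀ u u' v v' : ℝ, 0 < u → u < u' → 0 < v → v < v' → Λ u v < Λ u' v') := by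
  obtain ⟨hrange, hgr, h2inc⟩ := hC
  -- eventual membership of `p * u` in `[0,1]`
  have hmem : ∀ u : ℝ, 0 ≤ u → ∀ᶠ p in nhdsWithin (0:ℝ) (Ioi 0), p * u ∈ Icc (0:ℝ) 1 := by
    intro u hu
    rcases eq_or_lt_of_le hu with h | h
    · filter_upwards [self_mem_nhdsWithin] with p _
      simp [← h]
    · have h1 : Ioo (0:ℝ) (1/u) ∈ nhdsWithin (0:ℝ) (Ioi 0) :=
        Ioo_mem_nhdsGT_of_mem ⟨le_refl 0, by positivity⟩
      filter_upwards [h1] with p hp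
      exact ⟨le_of_lt (mul_pos hp.1 h), (le_div_iff₀ h).mp (le_of_lt hp.2)⟩
  -- (i) two-increasing
  have part1 : ∀ u u' v v' : ℝ, 0 ≤ u → u ≤ u' → 0 ≤ v → v ≤ v' →
      0 ≤ Λ u' v' - Λ u' v - Λ u v' + Λ u v := by
    intro u u' v v' hu huu hv hvv
    have hu' : 0 ≤ u' := hu.trans huu
    have hv' : 0 ≤ v' := hv.trans hvv
    have hT := (((hΛ u' v' hu' hv').sub (hΛ u' v hu' hv)).sub (hΛ u v' hu hv')).add
      (hΛ u v hu hv)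
    refine ge_of_tendsto hT ?_
    filter_upwards [hmem u hu, hmem u' hu', hmem v hv, hmem v' hv', self_mem_nhdsWithin]
      with p hpu hpu' hpv hpv' hp
    have hp0 : (0:ℝ) < p := hp
    have h0 : 0 ≤ C (p*u') (p*v') - C (p*u') (p*v) - C (p*u) (p*v') + C (p*u) (p*v) :=
      h2inc _ _ _ _ hpu hpu' hpv hpv'
        (mul_le_mul_of_nonneg_left huu hp0.le) (mul_le_mul_of_nonneg_left hvv hp0.le)
    have heq : C (p*u') (p*v') / p - C (p*u') (p*v) / p - C (p*u) (p*v') / p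
        + C (p*u) (p*v) / p
        = (C (p*u') (p*v') - C (p*u') (p*v) - C (p*u) (p*v') + C (p*u) (p*v)) / p := by
      rw [div_sub_div_same, div_sub_div_same, ← add_div]
    rw [heq]
    exact div_nonneg h0 hp0.le
  -- (ii) grounded
  have part2 : ∀ u v : ℝ, 0 ≤ u → 0 ≤ v → (u = 0 ∨ v = 0) → Λ u v = 0 := by
    intro u v hu hv h0
    have hT := hΛ u v hu hv
    have hzero : Tendsto (fun p : ℝ => C (p*u) (p*v) / p) (nhdsWithin (0:ℝ) (Ioi 0))
        (nhds 0) := by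
      refine Tendsto.congr' ?_ (tendsto_const_nhds (α := ℝ))
      filter_upwards [hmem u hu, hmem v hv] with p hpu hpv
      rcases h0 with rfl | rfl
      · simp [(hgr (p*v) hpv).2.1]
      · simp [(hgr (p*u) hpu).1]
    exact tendsto_nhds_unique hT hzero
  -- (iii) monotone
  have part3 : ∀ u u' v v' : ℝ, 0 ≤ u → u ≤ u' → 0 ≤ v → v ≤ v' → Λ u v ≤ Λ u' v' := by
    intro u u' v v' hu huu hv hvv
    have hu' : 0 ≤ u' := hu.trans huu
    have hv' : 0 ≤ v' := hv.trans hvv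
    have h1 := part1 u u' 0 v' hu huu le_rfl hv'
    have h2 := part1 0 u v v' le_rfl hu hv hvv
    rw [part2 u' 0 hu' le_rfl (Or.inr rfl), part2 u 0 hu le_rfl (Or.inr rfl)] at h1
    rw [part2 0 v' le_rfl hv' (Or.inl rfl), part2 0 v le_rfl hv (Or.inl rfl)] at h2
    linarith
  have hnn : ∀ u v : ℝ, 0 ≤ u → 0 ≤ v → 0 ≤ Λ u v := by
    intro u v hu hv
    have := part3 0 u 0 v le_rfl hu le_rfl hv
    rwa [part2 0 0 le_rfl le_rfl (Or.inl rfl)] at this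
  -- homogeneity of Λ
  have hom : ∀ t u v : ℝ, 0 < t → 0 ≤ u → 0 ≤ v → Λ (t*u) (t*v) = t * Λ u v := by
    intro t u v ht hu hv
    have h1 := hΛ (t*u) (t*v) (by positivity) (by positivity)
    have hmap : Tendsto (fun p : ℝ => p * t) (nhdsWithin (0:ℝ) (Ioi 0))
        (nhdsWithin (0:ℝ) (Ioi 0)) := by
      refine tendsto_nhdsWithin_of_tendsto_nhds_of_eventually_within _ ?_ ?_
      · have : Tendsto (fun p : ℝ => p * t) (nhdsWithin (0:ℝ) (Ioi 0)) (nhds (0 * t)) :=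
          (tendsto_id.mono_left nhdsWithin_le_nhds).mul_const t
        simpa using this
      · filter_upwards [self_mem_nhdsWithin] with p hp
        exact mul_pos hp ht
    have h3 := ((hΛ u v hu hv).comp hmap).const_mul t
    have h5 : Tendsto (fun p : ℝ => C (p*(t*u)) (p*(t*v)) / p) (nhdsWithin (0:ℝ) (Ioi 0))
        (nhds (t * Λ u v)) := by
      refine h3.congr' ?_
      filter_upwards [self_mem_nhdsWithin] with p hp
      have hp0 : p ≠ 0 := ne_of_gt hp
      have ht0 : t ≠ 0 := ne_of_gt ht
      simp only [Function.comp]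
      rw [show p * t * u = p * (t * u) by ring, show p * t * v = p * (t * v) by ring]
      field_simp
    exact tendsto_nhds_unique h1 h5
  refine ⟨part1, part2, part3, ?_⟩
  -- (iv) strict monotonicity
  intro hne u u' v v' hu huu hv hvv
  push_neg at hne
  obtain ⟨a, b, ha, hb, hab⟩ := hne
  have ha0 : 0 < a := lt_of_le_of_ne ha fun h => hab (part2 a b ha hb (Or.inl h.symm))
  have hb0 : 0 < b := lt_of_le_of_ne hb fun h => hab (part2 a b ha hb (Or.inr h.symm))
  have habpos : 0 < Λ a b := lt_of_le_of_ne (hnn a b ha hb) (Ne.symm hab)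
  have hu' : 0 < u' := hu.trans huu
  have hv' : 0 < v' := hv.trans hvv
  rcases eq_or_lt_of_le (hnn u v hu.le hv.le) with h0 | hpos
  · -- Λ u v = 0; show Λ u' v' > 0
    set t := min (u'/a) (v'/b) with htdef
    have ht : 0 < t := lt_min (by positivity) (by positivity)
    have hta : t * a ≤ u' := by
      have := min_le_left (u'/a) (v'/b)
      calc t * a ≤ (u'/a) * a := mul_le_mul_of_nonneg_right this ha0.le
        _ = u' := by field_simp
    have htb : t * b ≤ v' := by
      have := min_le_right (u'/a) (v'/b)
      calc t * b ≤ (v'/b) * b := mul_le_mul_of_nonneg_right this hb0.le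
        _ = v' := by field_simp
    have h1 : 0 < Λ (t*a) (t*b) := by
      rw [hom t a b ht ha hb]; positivity
    have h2 : Λ (t*a) (t*b) ≤ Λ u' v' :=
      part3 (t*a) u' (t*b) v' (by positivity) hta (by positivity) htb
    linarith
  · -- Λ u v > 0; scale up
    set t := min (u'/u) (v'/v) with htdef
    have ht1 : 1 < t := lt_min ((one_lt_div hu).mpr huu) ((one_lt_div hv).mpr hvv)
    have ht : 0 < t := lt_trans one_pos ht1
    have hta : t * u ≤ u' := by
      have := min_le_left (u'/u) (v'/v)
      calc t * u ≤ (u'/u) * u := mul_le_mul_of_nonneg_right this hu.le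
        _ = u' := by field_simp
    have htb : t * v ≤ v' := by
      have := min_le_right (u'/u) (v'/v)
      calc t * v ≤ (v'/v) * v := mul_le_mul_of_nonneg_right this hv.le
        _ = v' := by field_simp
    have h1 : Λ u v < Λ (t*u) (t*v) := by
      rw [hom t u v ht hu.le hv.le]
      nlinarith
    have h2 : Λ (t*u) (t*v) ≤ Λ u' v' :=
      part3 (t*u) u' (t*v) v' (by positivity) hta (by positivity) htb
    linarith
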